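/- arXiv:1203.2037 — 7 statements merged into one kernel-verified Lean document; each statement's English description precedes it below -/
import Mathlib

section
/- The map R_{α,β}(x,y) = (αy(x+y)/(βx+αy), βx(x+y)/(βx+αy)) on ℂ × ℂ satisfies the parametric Yang–Baxter equation R²³_{β,γ} ∘ R¹³_{α,γ} ∘ R¹²_{α,β} = R¹²_{α,β} ∘ R¹³_{α,γ} ∘ R²³_{β,γ}, wherever all expressions are defined. -/
noncomputable section

/-- First component of the map. -/
def uYB (α β x y : ℂ) : ℂ := α*y*(x+y) / (β*x+α*y)

/-- Second component of the map. -/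
def vYB (α β x y : ℂ) : ℂ := β*x*(x+y) / (β*x+α*y)

/-- The denominator appearing in the map. -/
def dYB (α β x y : ℂ) : ℂ := β*x+α*y

set_option maxHeartbeats 2000000 in
/-- the map `R_(α,β)(x,y) = (αy(x+y)/(βx+αy), βx(x+y)/(βx+αy))` satisfies the parametric Yang–Baxter equation
`R²³ ∘ R¹³ ∘ R¹² = R¹² ∘ R¹³ ∘ R²³` on `ℂ³`, wherever all denominators are nonzero. -/
theorem Q1_YangBaxter (α β γ x y z : ℂ)
    (x₁ y₁ x₂ z₁ y₂ z₂ ty tz tx tzz txx tyy : ℂ)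
    -- left-hand side  R²³_(β,γ) ∘ R¹³_(α,γ) ∘ R¹²_(α,β) (x,y,z):
    (hx₁ : x₁ = uYB α β x y) (hy₁ : y₁ = vYB α β x y)
    (hx₂ : x₂ = uYB α γ x₁ z) (hz₁ : z₁ = vYB α γ x₁ z)
    (hy₂ : y₂ = uYB β γ y₁ z₁) (hz₂ : z₂ = vYB β γ y₁ z₁)
    -- right-hand side  R¹²_(α,β) ∘ R¹³_(α,γ) ∘ R²³_(β,γ) (x,y,z):
    (hty : ty = uYB β γ y z) (htz : tz = vYB β γ y z)
    (htx : tx = uYB α γ x tz) (htzz : tzz = vYB α γ x tz)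
    (htxx : txx = uYB α β tx ty) (htyy : tyy = vYB α β tx ty)
    -- all denominators nonzero:
    (h1 : dYB α β x y ≠ 0) (h2 : dYB α γ x₁ z ≠ 0) (h3 : dYB β γ y₁ z₁ ≠ 0)
    (h4 : dYB β γ y z ≠ 0) (h5 : dYB α γ x tz ≠ 0) (h6 : dYB α β tx ty ≠ 0) :
    x₂ = txx ∧ y₂ = tyy ∧ z₂ = tzz := by
  rw [dYB] at h1 h2 h3 h4 h5 h6
  rw [uYB] at hx₁ hty
  rw [vYB] at hy₁ htz
  rw [hx₁] at hx₂ hz₁ h2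
  rw [htz] at htx htzz h5
  have hA : β*x+α*y ≠ 0 := h1
  have hB : γ*y+β*z ≠ 0 := h4
  have hA' : x*β+α*y ≠ 0 := by rwa [mul_comm x]
  have hB' : γ*y+z*β ≠ 0 := by rwa [mul_comm z]
  -- clean nonzero facts
  have eK : γ*(α*y*(x+y)/(β*x+α*y))+α*z
      = α*(γ*y*(x+y)+z*(β*x+α*y))/(β*x+α*y) := by
    field_simp
  have hK : γ*y*(x+y)+z*(β*x+α*y) ≠ 0 := by
    intro hk; apply h2; rw [eK, hk, mul_zero, zero_div]
  have eN : γ*x+α*(γ*y*(y+z)/(γ*y+β*z))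
      = γ*(y*(γ*x+α*y)+z*(β*x+α*y))/(γ*y+β*z) := by
    field_simp; ring
  have hN : y*(γ*x+α*y)+z*(β*x+α*y) ≠ 0 := by
    intro hn; apply h5; rw [eN, hn, mul_zero, zero_div]
  have hAK : (β*x+α*y)*(γ*y*(x+y)+z*(β*x+α*y)) ≠ 0 := mul_ne_zero hA hK
  have hKN : (γ*y*(x+y)+z*(β*x+α*y))*(y*(γ*x+α*y)+z*(β*x+α*y)) ≠ 0 :=
    mul_ne_zero hK hN
  have hBN : (γ*y+β*z)*(y*(γ*x+α*y)+z*(β*x+α*y)) ≠ 0 := mul_ne_zero hB hN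
  have hK2 := hK
  ring_nf at hK2
  have hN2 := hN
  ring_nf at hN2
  -- left branch
  have F1 : x₂ = z*(α*y*(x+y)+z*(β*x+α*y))/(γ*y*(x+y)+z*(β*x+α*y)) := by
    rw [hx₂, uYB, div_eq_div_iff h2 hK]; field_simp
  have F2 : z₁ = γ*y*(x+y)*(α*y*(x+y)+z*(β*x+α*y))
      /((β*x+α*y)*(γ*y*(x+y)+z*(β*x+α*y))) := by
    rw [hz₁, vYB, div_eq_div_iff h2 hAK]; field_simp
  rw [hy₁, F2] at hy₂ hz₂ h3
  have esumF : β*x*(x+y)/(β*x+α*y)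
      + γ*y*(x+y)*(α*y*(x+y)+z*(β*x+α*y))
        /((β*x+α*y)*(γ*y*(x+y)+z*(β*x+α*y)))
      = (x+y)*(γ*y*(x+y)+z*(β*x+γ*y))/(γ*y*(x+y)+z*(β*x+α*y)) := by
    rw [div_add_div _ _ hA hAK, div_eq_div_iff (mul_ne_zero hA hAK) hK]
    ring
  have edenF : γ*(β*x*(x+y)/(β*x+α*y))
      + β*(γ*y*(x+y)*(α*y*(x+y)+z*(β*x+α*y))
        /((β*x+α*y)*(γ*y*(x+y)+z*(β*x+α*y))))
      = β*γ*(x+y)^2*(y*(γ*x+α*y)+z*(β*x+α*y))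
        /((β*x+α*y)*(γ*y*(x+y)+z*(β*x+α*y))) := by
    rw [mul_div_assoc', mul_div_assoc', div_add_div _ _ hA hAK, div_eq_div_iff (mul_ne_zero hA hAK) hAK]
    ring
  rw [edenF] at h3
  have hWF : β*γ*(x+y)^2 ≠ 0 := by
    intro hw; apply h3; rw [hw, zero_mul, zero_div]
  have F3 : y₂ = y*(α*y*(x+y)+z*(β*x+α*y))*(γ*y*(x+y)+z*(β*x+γ*y))
      /((γ*y*(x+y)+z*(β*x+α*y))*(y*(γ*x+α*y)+z*(β*x+α*y))) := by
    rw [hy₂, uYB, esumF, edenF]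
    have hβ : β ≠ 0 := by rintro rfl; simp at hWF
    have hγ : γ ≠ 0 := by rintro rfl; simp at hWF
    have hS : x + y ≠ 0 := by intro h; apply hWF; rw [h]; ring
    generalize hKg : γ*y*(x+y)+z*(β*x+α*y) = K at *
    generalize hNg : y*(γ*x+α*y)+z*(β*x+α*y) = N at *
    generalize hAg : β*x+α*y = A at *
    generalize hSg : x+y = S at *
    field_simp
  have F4 : z₂ = x*(γ*y*(x+y)+z*(β*x+γ*y))/(y*(γ*x+α*y)+z*(β*x+α*y)) := by
    rw [hz₂, vYB, esumF, edenF]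
    have hβ : β ≠ 0 := by rintro rfl; simp at hWF
    have hγ : γ ≠ 0 := by rintro rfl; simp at hWF
    have hS : x + y ≠ 0 := by intro h; apply hWF; rw [h]; ring
    generalize hKg : γ*y*(x+y)+z*(β*x+α*y) = K at *
    generalize hNg : y*(γ*x+α*y)+z*(β*x+α*y) = N at *
    generalize hAg : β*x+α*y = A at *
    generalize hSg : x+y = S at *
    field_simp
  -- right branch
  have G1 : tx = α*y*(y+z)*(γ*y*(x+y)+z*(β*x+γ*y))
      /((γ*y+β*z)*(y*(γ*x+α*y)+z*(β*x+α*y))) := by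
    rw [htx, uYB, div_eq_div_iff h5 hBN]; field_simp; ring
  have G2 : tzz = x*(γ*y*(x+y)+z*(β*x+γ*y))/(y*(γ*x+α*y)+z*(β*x+α*y)) := by
    rw [htzz, vYB, div_eq_div_iff h5 hN]; field_simp; ring
  rw [hty, G1] at htxx htyy h6
  have esum : α*y*(y+z)*(γ*y*(x+y)+z*(β*x+γ*y))
        /((γ*y+β*z)*(y*(γ*x+α*y)+z*(β*x+α*y)))
      + β*z*(y+z)/(γ*y+β*z)
      = (y+z)*(α*y*(x+y)+z*(β*x+α*y))/(y*(γ*x+α*y)+z*(β*x+α*y)) := by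
    rw [div_add_div _ _ hBN hB, div_eq_div_iff (mul_ne_zero hBN hB) hN]
    ring
  have eden : β*(α*y*(y+z)*(γ*y*(x+y)+z*(β*x+γ*y))
        /((γ*y+β*z)*(y*(γ*x+α*y)+z*(β*x+α*y))))
      + α*(β*z*(y+z)/(γ*y+β*z))
      = α*β*(y+z)^2*(γ*y*(x+y)+z*(β*x+α*y))
        /((γ*y+β*z)*(y*(γ*x+α*y)+z*(β*x+α*y))) := by
    rw [mul_div_assoc', mul_div_assoc', div_add_div _ _ hBN hB, div_eq_div_iff (mul_ne_zero hBN hB) hBN]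
    ring
  rw [eden] at h6
  have hW : α*β*(y+z)^2 ≠ 0 := by
    intro hw; apply h6; rw [hw, zero_mul, zero_div]
  have G3 : txx = z*(α*y*(x+y)+z*(β*x+α*y))/(γ*y*(x+y)+z*(β*x+α*y)) := by
    rw [htxx, uYB, esum, eden]
    have hα : α ≠ 0 := by rintro rfl; simp at hW
    have hβ : β ≠ 0 := by rintro rfl; simp at hW
    have hT : y + z ≠ 0 := by intro h; apply hW; rw [h]; ring
    generalize hKg : γ*y*(x+y)+z*(β*x+α*y) = K at *
    generalize hNg : y*(γ*x+α*y)+z*(β*x+α*y) = N at *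
    generalize hBg : γ*y+β*z = B at *
    generalize hTg : y+z = T at *
    field_simp
  have G4 : tyy = y*(α*y*(x+y)+z*(β*x+α*y))*(γ*y*(x+y)+z*(β*x+γ*y))
      /((γ*y*(x+y)+z*(β*x+α*y))*(y*(γ*x+α*y)+z*(β*x+α*y))) := by
    rw [htyy, vYB, esum, eden]
    have hα : α ≠ 0 := by rintro rfl; simp at hW
    have hβ : β ≠ 0 := by rintro rfl; simp at hW
    have hT : y + z ≠ 0 := by intro h; apply hW; rw [h]; ring
    generalize hKg : γ*y*(x+y)+z*(β*x+α*y) = K at *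
    generalize hNg : y*(γ*x+α*y)+z*(β*x+α*y) = N at *
    generalize hBg : γ*y+β*z = B at *
    generalize hTg : y+z = T at *
    field_simp
  exact ⟨F1.trans G3.symm, F3.trans G4.symm, F4.trans G2.symm⟩

end
end

section
/- The ternary operation μ_{α,β}(a,b,c) = b − (α−β)/(c−a) on ℂ, arising from the discrete KdV equation (c−a)(b−w) = α−β, satisfies the two 3D-compatibility identities μ_{β,γ}(a, μ_{α,β}(a,b,c), μ_{α,γ}(μ_{α,β}(a,b,c), c, d)) = μ_{α,γ}(a, b, μ_{β,γ}(b,c,d)) and μ_{α,β}(μ_{α,γ}(a,b,μ_{β,γ}(b,c,d)), μ_{β,γ}(b,c,d), d) = μ_{α,γ}(μ_{α,β}(a,b,c), c, d), wherever all denominators are nonzero. -/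
noncomputable section

/-- The discrete KdV ternary operation. -/
def muKdV (α β a b c : ℂ) : ℂ := b - (α-β)/(c-a)

/-- the dKdV ternary operation satisfies the two 3D-compatibility identities,
wherever all denominators are nonzero. -/
theorem dKdV_3D_compatible (α β γ a b c d w₁ w₂ t₁ l₁ r₁ l₂ : ℂ)
    (hw₁ : w₁ = muKdV α β a b c) (hw₂ : w₂ = muKdV β γ b c d)
    (ht₁ : t₁ = muKdV α γ w₁ c d)
    (hl₁ : l₁ = muKdV β γ a w₁ t₁) (hr₁ : r₁ = muKdV α γ a b w₂)
    (hl₂ : l₂ = muKdV α β r₁ w₂ d)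
    (h1 : c - a ≠ 0) (h2 : d - b ≠ 0)
    (h3 : d - w₁ ≠ 0) (h4 : t₁ - a ≠ 0)
    (h5 : w₂ - a ≠ 0) (h6 : d - r₁ ≠ 0) :
    l₁ = r₁ ∧ l₂ = t₁ := by
  subst hw₁ hw₂ ht₁ hl₁ hr₁ hl₂
  simp only [muKdV]
  simp only [muKdV] at h3 h5
  set P : ℂ := (d-b)*(c-a) + (α-β) with hPdef
  set Q : ℂ := (c-a)*(d-b) - (β-γ) with hQdef
  have e3 : d - (b - (α-β)/(c-a)) = P/(c-a) := by field_simp; ring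
  have hP : P ≠ 0 := by
    intro h; apply h3; rw [e3, h, zero_div]
  have e5 : c - (β-γ)/(d-b) - a = Q/(d-b) := by field_simp; ring
  have hQ : Q ≠ 0 := by
    intro h; apply h5; rw [e5, h, zero_div]
  have e4 : c - (α-γ)/(P/(c-a)) - a = (c-a)*Q/P := by
    rw [div_div_eq_mul_div]; field_simp; ring
  have e6 : d - (b - (α-γ)/(Q/(d-b))) = (d-b)*P/Q := by
    rw [div_div_eq_mul_div]; field_simp; ring
  rw [e3, e5, e4, e6]
  constructor
  · field_simp
    ring
  · field_simp
    ring
end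
end

section
/- The four-parametric map R_{α,β}(x,y) = (y(β₁x + α₂y)/(α₁x + β₂y), x(β₁x + α₂y)/(α₁x + β₂y)), with parameters α = (α₁,α₂), β = (β₁,β₂), satisfies the parametric Yang–Baxter equation R²³_{β,γ} ∘ R¹³_{α,γ} ∘ R¹²_{α,β} = R¹²_{α,β} ∘ R¹³_{α,γ} ∘ R²³_{β,γ}, wherever defined. -/
noncomputable section

/-- First component of the four-parametric map, `α = (p₁,p₂)`, `β = (q₁,q₂)`. -/
def u4 (p₁ p₂ q₁ q₂ x y : ℂ) : ℂ := y * (q₁*x + p₂*y) / (p₁*x + q₂*y)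

/-- Second component of the four-parametric map. -/
def v4 (p₁ p₂ q₁ q₂ x y : ℂ) : ℂ := x * (q₁*x + p₂*y) / (p₁*x + q₂*y)

/-- Its denominator. -/
def d4 (p₁ p₂ q₁ q₂ x y : ℂ) : ℂ := p₁*x + q₂*y

set_option maxHeartbeats 3200000

/-- the four-parametric map
`R_(α,β)(x,y) = (y(β₁x+α₂y)/(α₁x+β₂y), x(β₁x+α₂y)/(α₁x+β₂y))`, `α = (α₁,α₂)`, `β = (β₁,β₂)`,
satisfies the parametric Yang–Baxter equation, wherever defined. -/
theorem fourparam_YangBaxter (α₁ α₂ β₁ β₂ γ₁ γ₂ x y z : ℂ)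
    (hx : x ≠ 0) (hy : y ≠ 0) (hz : z ≠ 0)
    (x₁ y₁ x₂ z₁ y₂ z₂ ty tz tx tzz txx tyy : ℂ)
    (hx₁ : x₁ = u4 α₁ α₂ β₁ β₂ x y) (hy₁ : y₁ = v4 α₁ α₂ β₁ β₂ x y)
    (hx₂ : x₂ = u4 α₁ α₂ γ₁ γ₂ x₁ z) (hz₁ : z₁ = v4 α₁ α₂ γ₁ γ₂ x₁ z)
    (hy₂ : y₂ = u4 β₁ β₂ γ₁ γ₂ y₁ z₁) (hz₂ : z₂ = v4 β₁ β₂ γ₁ γ₂ y₁ z₁)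
    (hty : ty = u4 β₁ β₂ γ₁ γ₂ y z) (htz : tz = v4 β₁ β₂ γ₁ γ₂ y z)
    (htx : tx = u4 α₁ α₂ γ₁ γ₂ x tz) (htzz : tzz = v4 α₁ α₂ γ₁ γ₂ x tz)
    (htxx : txx = u4 α₁ α₂ β₁ β₂ tx ty) (htyy : tyy = v4 α₁ α₂ β₁ β₂ tx ty)
    (h1 : d4 α₁ α₂ β₁ β₂ x y ≠ 0) (h2 : d4 α₁ α₂ γ₁ γ₂ x₁ z ≠ 0)
    (h3 : d4 β₁ β₂ γ₁ γ₂ y₁ z₁ ≠ 0) (h4 : d4 β₁ β₂ γ₁ γ₂ y z ≠ 0)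
    (h5 : d4 α₁ α₂ γ₁ γ₂ x tz ≠ 0) (h6 : d4 α₁ α₂ β₁ β₂ tx ty ≠ 0) :
    x₂ = txx ∧ y₂ = tyy ∧ z₂ = tzz := by
  simp only [u4, v4, d4] at hx₁ hy₁ hx₂ hz₁ hy₂ hz₂ hty htz htx htzz htxx htyy h1 h2 h3 h4 h5 h6
  -- left side: R¹² then R¹³ then R²³
  set A : ℂ := α₁*x + β₂*y with hAd
  set N : ℂ := β₁*x + α₂*y with hNd
  clear_value A N
  -- h1 : A ≠ 0
  set D2 : ℂ := α₁*(y*N) + γ₂*z*A with hD2d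
  set M2 : ℂ := γ₁*(y*N) + α₂*z*A with hM2d
  clear_value D2 M2
  have hd2 : α₁*x₁ + γ₂*z = D2/A := by rw [hx₁, hD2d]; field_simp
  have hm2 : γ₁*x₁ + α₂*z = M2/A := by rw [hx₁, hM2d]; field_simp
  rw [hd2] at h2
  have hD2 : D2 ≠ 0 := fun h => h2 (by rw [h, zero_div])
  have hx₂' : x₂ = z*M2/D2 := by
    rw [hx₂, hd2, hm2]; field_simp
  have hz₁' : z₁ = y*N*M2/(A*D2) := by
    rw [hz₁, hd2, hm2, hx₁]; field_simp; try ring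
  set D3 : ℂ := β₁*x*D2 + γ₂*(y*M2) with hD3d
  set M3 : ℂ := γ₁*x*D2 + β₂*(y*M2) with hM3d
  clear_value D3 M3
  have hd3 : β₁*y₁ + γ₂*z₁ = N*D3/(A*D2) := by
    rw [hy₁, hz₁', hD3d]; field_simp; try ring
  have hm3 : γ₁*y₁ + β₂*z₁ = N*M3/(A*D2) := by
    rw [hy₁, hz₁', hM3d]; field_simp; try ring
  rw [hd3] at h3
  have hN0 : N ≠ 0 := fun h => h3 (by rw [h, zero_mul, zero_div])
  have hD3 : D3 ≠ 0 := fun h => h3 (by rw [h, mul_zero, zero_div])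
  have hy₂' : y₂ = y*N*M2*M3/(A*D2*D3) := by
    rw [hy₂, hd3, hm3, hz₁']; field_simp; try ring
  have hz₂' : z₂ = x*N*M3/(A*D3) := by
    rw [hz₂, hd3, hm3, hy₁]; field_simp; try ring
  -- right side: R²³ then R¹³ then R¹²
  set B : ℂ := β₁*y + γ₂*z with hBd
  set P : ℂ := γ₁*y + β₂*z with hPd
  clear_value B P
  -- h4 : B ≠ 0
  set E2 : ℂ := α₁*x*B + γ₂*(y*P) with hE2d
  set F2 : ℂ := γ₁*x*B + α₂*(y*P) with hF2d
  clear_value E2 F2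
  have he2 : α₁*x + γ₂*tz = E2/B := by rw [htz, hE2d]; field_simp; try ring
  have hf2 : γ₁*x + α₂*tz = F2/B := by rw [htz, hF2d]; field_simp; try ring
  rw [he2] at h5
  have hE2 : E2 ≠ 0 := fun h => h5 (by rw [h, zero_div])
  have htx' : tx = y*P*F2/(B*E2) := by
    rw [htx, he2, hf2, htz]; field_simp; try ring
  have htzz' : tzz = x*F2/E2 := by
    rw [htzz, he2, hf2]; field_simp
  set E3 : ℂ := α₁*(y*(P*F2)) + β₂*(z*(P*E2)) with hE3d
  set F3 : ℂ := β₁*(y*(P*F2)) + α₂*(z*(P*E2)) with hF3d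
  clear_value E3 F3
  have he3 : α₁*tx + β₂*ty = E3/(B*E2) := by
    rw [htx', hty, hE3d]; field_simp; try ring
  have hf3 : β₁*tx + α₂*ty = F3/(B*E2) := by
    rw [htx', hty, hF3d]; field_simp; try ring
  rw [he3] at h6
  have hE3 : E3 ≠ 0 := fun h => h6 (by rw [h, zero_div])
  have hP0 : P ≠ 0 := by
    intro h
    apply hE3
    rw [hE3d, h]; ring
  have hE3' : α₁*(y*F2) + β₂*(z*E2) ≠ 0 := by
    intro h
    apply hE3
    rw [hE3d]
    have : α₁*(y*(P*F2)) + β₂*(z*(P*E2)) = P * (α₁*(y*F2) + β₂*(z*E2)) := by ring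
    rw [this, h, mul_zero]
  have htxx' : txx = z*P*F3/(B*E3) := by
    rw [htxx, he3, hf3, hty]; field_simp; try ring
  have htyy' : tyy = y*P*F2*F3/(B*E2*E3) := by
    rw [htyy, he3, hf3, htx']; field_simp; try ring
  -- the three polynomial identities
  refine ⟨?_, ?_, ?_⟩
  · rw [hx₂', htxx', div_eq_div_iff hD2 (mul_ne_zero h4 hE3)]
    rw [hF3d, hE3d, hD2d, hM2d, hF2d, hE2d, hAd, hNd, hBd, hPd]
    ring
  · rw [hy₂', htyy', div_eq_div_iff (mul_ne_zero (mul_ne_zero h1 hD2) hD3)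
      (mul_ne_zero (mul_ne_zero h4 hE2) hE3)]
    rw [hF3d, hE3d, hM3d, hD3d, hD2d, hM2d, hF2d, hE2d, hAd, hNd, hBd, hPd]
    ring
  · rw [hz₂', htzz', div_eq_div_iff (mul_ne_zero h1 hD3) hE2]
    rw [hM3d, hD3d, hD2d, hM2d, hF2d, hE2d, hAd, hNd, hBd, hPd]
    ring

end
end

section
/- The matrix L(x;α) = [[−α₁ζ, x],[1/x, −α₂ζ]] is a strong Lax matrix for the map R_{α,β}(x,y) = (u,v) with u = y(β₁x + α₂y)/(α₁x + β₂y) and v = x(β₁x + α₂y)/(α₁x + β₂y): the matrix equation L(u;α)L(v;β) = L(y;β)L(x;α), holding identically in the spectral parameter ζ, is equivalent to (u,v) = R_{α,β}(x,y) for nonzero x, y, u, v (with α₁β₂ ≠ α₂β₁ and denominators nonzero). -/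
noncomputable section

open Matrix

/-- The Lax matrix `L(x;α) = [[−α₁ζ, x],[1/x, −α₂ζ]]`, `α = (α₁,α₂)`. -/
def LaxL (p₁ p₂ x ζ : ℂ) : Matrix (Fin 2) (Fin 2) ℂ :=
  !![-p₁*ζ, x; 1/x, -p₂*ζ]

/-- `L(x;α)` is a strong Lax matrix for the map
`R_(α,β)(x,y) = (y(β₁x+α₂y)/(α₁x+β₂y), x(β₁x+α₂y)/(α₁x+β₂y))`: for nonzero `x,y,u,v`,
with `α₁β₂ ≠ α₂β₁` and the denominator `α₁x+β₂y` nonzero, the equation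
`L(u;α)L(v;β) = L(y;β)L(x;α)` holding identically in the spectral parameter `ζ`
is equivalent to `(u,v) = R_(α,β)(x,y)`. -/
theorem Lax_strong (α₁ α₂ β₁ β₂ x y u v : ℂ)
    (hx : x ≠ 0) (hy : y ≠ 0) (hu : u ≠ 0) (hv : v ≠ 0)
    (hnd : α₁*β₂ ≠ α₂*β₁) (hden : α₁*x + β₂*y ≠ 0) :
    (∀ ζ : ℂ, LaxL α₁ α₂ u ζ * LaxL β₁ β₂ v ζ = LaxL β₁ β₂ y ζ * LaxL α₁ α₂ x ζ) ↔
      (u = y * (β₁*x + α₂*y) / (α₁*x + β₂*y) ∧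
       v = x * (β₁*x + α₂*y) / (α₁*x + β₂*y)) := by
  constructor
  · intro h
    have h0 := congrFun (congrFun (h 0) 0) 0
    have h1 := congrFun (congrFun (h 1) 0) 1
    simp [LaxL, Matrix.mul_apply, Fin.sum_univ_two] at h0 h1
    -- h0 : u * v⁻¹ = y * x⁻¹
    -- h1 : -(α₁ * v) + -(u * β₂) = -(β₁ * x) + -(y * α₂)
    have e0 : u * x = y * v := by
      field_simp at h0
      linear_combination h0
    constructor
    · rw [eq_div_iff hden]
      linear_combination (-y) * h1 + α₁ * e0
    · rw [eq_div_iff hden]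
      linear_combination (-x) * h1 + (-β₂) * e0
  · rintro ⟨hu', hv'⟩
    have hN : β₁*x + α₂*y ≠ 0 := by
      intro hN0
      apply hu
      rw [hu', hN0, mul_zero, zero_div]
    intro ζ
    have e0 : u * x = y * v := by rw [hu', hv']; ring
    have e1 : α₁*v + u*β₂ = β₁*x + α₂*y := by
      rw [hu', hv', mul_div_assoc', div_mul_eq_mul_div, ← add_div, div_eq_iff hden]
      ring
    ext i j
    fin_cases i <;> fin_cases j <;>
      simp [LaxL, Matrix.mul_apply, Fin.sum_univ_two] <;>
      field_simp
    · linear_combination e0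
    · linear_combination (-ζ) * e1
    · linear_combination (ζ*y*v) * e1 + (ζ*α₁*v - ζ*α₂*y) * e0
    · linear_combination (-1) * e0

end
end

section
/- The ternary operation μ_{α,β}(a,b,c) = b(β₁a + α₂c)/(α₁a + β₂c), with parameters α = (α₁,α₂), β = (β₁,β₂), satisfies the two 3D-compatibility identities μ_{β,γ}(a, μ_{α,β}(a,b,c), μ_{α,γ}(μ_{α,β}(a,b,c), c, d)) = μ_{α,γ}(a, b, μ_{β,γ}(b,c,d)) and μ_{α,β}(μ_{α,γ}(a,b,μ_{β,γ}(b,c,d)), μ_{β,γ}(b,c,d), d) = μ_{α,γ}(μ_{α,β}(a,b,c), c, d), wherever all denominators are nonzero. -/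
noncomputable section

def mu4 (p₁ p₂ q₁ q₂ a b c : ℂ) : ℂ := b * (q₁*a + p₂*c) / (p₁*a + q₂*c)

def D4 (p₁ p₂ q₁ q₂ a c : ℂ) : ℂ := p₁*a + q₂*c

/-- the ternary operation `μ_(α,β)(a,b,c) = b(β₁a+α₂c)/(α₁a+β₂c)` satisfies
the two 3D-compatibility identities, wherever all denominators are nonzero. -/
theorem mu4_3D_compatible (α₁ α₂ β₁ β₂ γ₁ γ₂ a b c d w₁ w₂ t₁ l₁ r₁ l₂ : ℂ)
    (ha : a ≠ 0) (hb : b ≠ 0) (hc : c ≠ 0) (hd : d ≠ 0)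
    (hw₁ : w₁ = mu4 α₁ α₂ β₁ β₂ a b c) (hw₂ : w₂ = mu4 β₁ β₂ γ₁ γ₂ b c d)
    (ht₁ : t₁ = mu4 α₁ α₂ γ₁ γ₂ w₁ c d)
    (hl₁ : l₁ = mu4 β₁ β₂ γ₁ γ₂ a w₁ t₁) (hr₁ : r₁ = mu4 α₁ α₂ γ₁ γ₂ a b w₂)
    (hl₂ : l₂ = mu4 α₁ α₂ β₁ β₂ r₁ w₂ d)
    (h1 : D4 α₁ α₂ β₁ β₂ a c ≠ 0) (h2 : D4 β₁ β₂ γ₁ γ₂ b d ≠ 0)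
    (h3 : D4 α₁ α₂ γ₁ γ₂ w₁ d ≠ 0) (h4 : D4 β₁ β₂ γ₁ γ₂ a t₁ ≠ 0)
    (h5 : D4 α₁ α₂ γ₁ γ₂ a w₂ ≠ 0) (h6 : D4 α₁ α₂ β₁ β₂ r₁ d ≠ 0) :
    l₁ = r₁ ∧ l₂ = t₁ := by
  simp only [mu4, D4] at *
  -- step 1: denominator E3 of t₁
  have e3 : α₁*w₁ + γ₂*d
      = (α₁*(b*(β₁*a + α₂*c)) + γ₂*d*(α₁*a + β₂*c)) / (α₁*a + β₂*c) := by
    rw [hw₁, mul_div_assoc', div_add' _ _ _ h1]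
  have hE3 : α₁*(b*(β₁*a + α₂*c)) + γ₂*d*(α₁*a + β₂*c) ≠ 0 := by
    rw [e3] at h3
    exact fun h => h3 (by rw [h, zero_div])
  -- t₁ as a polynomial fraction
  have ht₁' : t₁ = c*(γ₁*(b*(β₁*a + α₂*c)) + α₂*d*(α₁*a + β₂*c))
      / (α₁*(b*(β₁*a + α₂*c)) + γ₂*d*(α₁*a + β₂*c)) := by
    rw [ht₁, e3, hw₁]
    rw [div_div_eq_mul_div, mul_div_assoc', div_add' _ _ _ h1, mul_assoc c, div_mul_cancel₀ _ h1]
  -- denominator E4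
  have e4 : β₁*a + γ₂*t₁
      = (β₁*a*(α₁*(b*(β₁*a + α₂*c)) + γ₂*d*(α₁*a + β₂*c))
         + γ₂*(c*(γ₁*(b*(β₁*a + α₂*c)) + α₂*d*(α₁*a + β₂*c))))
        / (α₁*(b*(β₁*a + α₂*c)) + γ₂*d*(α₁*a + β₂*c)) := by
    rw [ht₁', mul_div_assoc', add_div' _ _ _ hE3]
  have hE4 : β₁*a*(α₁*(b*(β₁*a + α₂*c)) + γ₂*d*(α₁*a + β₂*c))
         + γ₂*(c*(γ₁*(b*(β₁*a + α₂*c)) + α₂*d*(α₁*a + β₂*c))) ≠ 0 := by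
    rw [e4] at h4
    exact fun h => h4 (by rw [h, zero_div])
  -- denominator E5
  have e5 : α₁*a + γ₂*w₂
      = (α₁*a*(β₁*b + γ₂*d) + γ₂*(c*(γ₁*b + β₂*d))) / (β₁*b + γ₂*d) := by
    rw [hw₂, mul_div_assoc', add_div' _ _ _ h2]
  have hE5 : α₁*a*(β₁*b + γ₂*d) + γ₂*(c*(γ₁*b + β₂*d)) ≠ 0 := by
    rw [e5] at h5
    exact fun h => h5 (by rw [h, zero_div])
  -- r₁ as a polynomial fraction
  have hr₁' : r₁ = b*(γ₁*a*(β₁*b + γ₂*d) + α₂*(c*(γ₁*b + β₂*d)))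
      / (α₁*a*(β₁*b + γ₂*d) + γ₂*(c*(γ₁*b + β₂*d))) := by
    rw [hr₁, e5, hw₂]
    rw [div_div_eq_mul_div, mul_div_assoc', add_div' _ _ _ h2, mul_assoc b, div_mul_cancel₀ _ h2]
  -- denominator E6
  have e6 : α₁*r₁ + β₂*d
      = (α₁*(b*(γ₁*a*(β₁*b + γ₂*d) + α₂*(c*(γ₁*b + β₂*d))))
         + β₂*d*(α₁*a*(β₁*b + γ₂*d) + γ₂*(c*(γ₁*b + β₂*d))))
        / (α₁*a*(β₁*b + γ₂*d) + γ₂*(c*(γ₁*b + β₂*d))) := by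
    rw [hr₁', mul_div_assoc', div_add' _ _ _ hE5]
  have hE6 : α₁*(b*(γ₁*a*(β₁*b + γ₂*d) + α₂*(c*(γ₁*b + β₂*d))))
         + β₂*d*(α₁*a*(β₁*b + γ₂*d) + γ₂*(c*(γ₁*b + β₂*d))) ≠ 0 := by
    rw [e6] at h6
    exact fun h => h6 (by rw [h, zero_div])
  constructor
  · rw [hl₁, e4, hw₁, ht₁', hr₁']
    rw [div_eq_div_iff (div_ne_zero hE4 hE3) hE5]
    set D := α₁*a + β₂*c with hD
    set E3 := α₁*(b*(β₁*a + α₂*c)) + γ₂*d*D with hE3d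
    set E4 := β₁*a*E3 + γ₂*(c*(γ₁*(b*(β₁*a + α₂*c)) + α₂*d*D)) with hE4d
    set E5 := α₁*a*(β₁*b + γ₂*d) + γ₂*(c*(γ₁*b + β₂*d)) with hE5d
    field_simp
    rw [hE4d, hE3d, hD]
    ring
  · rw [hl₂, e6, hw₂, hr₁', ht₁']
    rw [div_eq_div_iff (div_ne_zero hE6 hE5) hE3]
    set D2 := β₁*b + γ₂*d with hD2
    set E5 := α₁*a*D2 + γ₂*(c*(γ₁*b + β₂*d)) with hE5d
    set E6 := α₁*(b*(γ₁*a*D2 + α₂*(c*(γ₁*b + β₂*d)))) + β₂*d*E5 with hE6d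
    set E3 := α₁*(b*(β₁*a + α₂*c)) + γ₂*d*(α₁*a + β₂*c) with hE3d
    field_simp
    rw [hE6d, hE5d, hD2]
    ring

end
end

section
/- The map R_{α,β}(x,y) = (y(α₁ + β₂xy)/(β₁ + α₂xy), x(β₁ + α₂xy)/(α₁ + β₂xy)) is an involution (R_{α,β} ∘ R_{α,β} = id), satisfies the invariance condition v(x,y)·u(x,y) = x·y where (u,v) = R_{α,β}(x,y), and satisfies the parametric Yang–Baxter equation, wherever defined. -/
noncomputable section

/-- First component of the map, `α = (p₁,p₂)`, `β = (q₁,q₂)`. -/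
def uI (p₁ p₂ q₁ q₂ x y : ℂ) : ℂ := y * (p₁ + q₂*x*y) / (q₁ + p₂*x*y)

/-- Second component of the map. -/
def vI (p₁ p₂ q₁ q₂ x y : ℂ) : ℂ := x * (q₁ + p₂*x*y) / (p₁ + q₂*x*y)

lemma step (p₁ p₂ q₁ q₂ X Y : ℂ) {N D M E : ℂ}
    (hX : X = N/D) (hY : Y = M/E) (hD : D ≠ 0) (hE : E ≠ 0)
    (hden : q₁ + p₂*X*Y ≠ 0) (hden' : p₁ + q₂*X*Y ≠ 0) :
    uI p₁ p₂ q₁ q₂ X Y = M*(p₁*(D*E) + q₂*(N*M))/(E*(q₁*(D*E) + p₂*(N*M))) ∧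
    vI p₁ p₂ q₁ q₂ X Y = N*(q₁*(D*E) + p₂*(N*M))/(D*(p₁*(D*E) + q₂*(N*M))) ∧
    q₁*(D*E) + p₂*(N*M) ≠ 0 ∧ p₁*(D*E) + q₂*(N*M) ≠ 0 := by
  subst hX hY
  have e : (q₁ + p₂*(N/D)*(M/E))*(D*E) = q₁*(D*E) + p₂*(N*M) := by
    field_simp
  have e' : (p₁ + q₂*(N/D)*(M/E))*(D*E) = p₁*(D*E) + q₂*(N*M) := by
    field_simp
  have hQ : q₁*(D*E) + p₂*(N*M) ≠ 0 := by
    rw [← e]; exact mul_ne_zero hden (mul_ne_zero hD hE)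
  have hP : p₁*(D*E) + q₂*(N*M) ≠ 0 := by
    rw [← e']; exact mul_ne_zero hden' (mul_ne_zero hD hE)
  refine ⟨?_, ?_, hQ, hP⟩
  · simp only [uI]
    rw [div_eq_div_iff hden (mul_ne_zero hE hQ)]
    field_simp
  · simp only [vI]
    rw [div_eq_div_iff hden' (mul_ne_zero hD hP)]
    field_simp

lemma inv_mul (p₁ p₂ q₁ q₂ X Y : ℂ)
    (hden : q₁ + p₂*X*Y ≠ 0) (hden' : p₁ + q₂*X*Y ≠ 0) :
    uI p₁ p₂ q₁ q₂ X Y * vI p₁ p₂ q₁ q₂ X Y = X * Y := by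
  simp only [uI, vI]
  rw [div_mul_div_comm, div_eq_iff (mul_ne_zero hden hden')]
  ring

set_option maxHeartbeats 1600000 in
/-- the map `R_(α,β)(x,y) = (y(α₁+β₂xy)/(β₁+α₂xy), x(β₁+α₂xy)/(α₁+β₂xy))`
is an involution, satisfies the invariance condition `v·u = x·y`, and satisfies the
parametric Yang–Baxter equation, wherever defined. -/
theorem involutive_fourparam_YB (α₁ α₂ β₁ β₂ γ₁ γ₂ x y z : ℂ)
    (hx : x ≠ 0) (hy : y ≠ 0) (hz : z ≠ 0)
    (x₁ y₁ x₂ z₁ y₂ z₂ ty tz tx tzz txx tyy : ℂ)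
    (hx₁ : x₁ = uI α₁ α₂ β₁ β₂ x y) (hy₁ : y₁ = vI α₁ α₂ β₁ β₂ x y)
    (hx₂ : x₂ = uI α₁ α₂ γ₁ γ₂ x₁ z) (hz₁ : z₁ = vI α₁ α₂ γ₁ γ₂ x₁ z)
    (hy₂ : y₂ = uI β₁ β₂ γ₁ γ₂ y₁ z₁) (hz₂ : z₂ = vI β₁ β₂ γ₁ γ₂ y₁ z₁)
    (hty : ty = uI β₁ β₂ γ₁ γ₂ y z) (htz : tz = vI β₁ β₂ γ₁ γ₂ y z)
    (htx : tx = uI α₁ α₂ γ₁ γ₂ x tz) (htzz : tzz = vI α₁ α₂ γ₁ γ₂ x tz)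
    (htxx : txx = uI α₁ α₂ β₁ β₂ tx ty) (htyy : tyy = vI α₁ α₂ β₁ β₂ tx ty)
    -- denominators nonzero at every point of application:
    (h1 : β₁ + α₂*x*y ≠ 0) (h1' : α₁ + β₂*x*y ≠ 0)
    (h1i : β₁ + α₂*x₁*y₁ ≠ 0) (h1i' : α₁ + β₂*x₁*y₁ ≠ 0)
    (h2 : γ₁ + α₂*x₁*z ≠ 0) (h2' : α₁ + γ₂*x₁*z ≠ 0)
    (h3 : γ₁ + β₂*y₁*z₁ ≠ 0) (h3' : β₁ + γ₂*y₁*z₁ ≠ 0)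
    (h4 : γ₁ + β₂*y*z ≠ 0) (h4' : β₁ + γ₂*y*z ≠ 0)
    (h5 : γ₁ + α₂*x*tz ≠ 0) (h5' : α₁ + γ₂*x*tz ≠ 0)
    (h6 : β₁ + α₂*tx*ty ≠ 0) (h6' : α₁ + β₂*tx*ty ≠ 0) :
    (uI α₁ α₂ β₁ β₂ x₁ y₁ = x ∧ vI α₁ α₂ β₁ β₂ x₁ y₁ = y) ∧
    y₁ * x₁ = x * y ∧
    (x₂ = txx ∧ y₂ = tyy ∧ z₂ = tzz) := by
  have one : (1:ℂ) ≠ 0 := one_ne_zero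
  -- step 1: (x,y) ↦ (x₁,y₁)
  obtain ⟨u1, v1, hq1, hp1⟩ :=
    step α₁ α₂ β₁ β₂ x y (div_one x).symm (div_one y).symm one one h1 h1'
  have Ex1 := hx₁.trans u1
  have Ey1 := hy₁.trans v1
  -- step 2: (x₁,z) ↦ (x₂,z₁)
  obtain ⟨u2, v2, hq2, hp2⟩ :=
    step α₁ α₂ γ₁ γ₂ x₁ z Ex1 (div_one z).symm (mul_ne_zero one hq1) one h2 h2'
  have Ex2 := hx₂.trans u2
  have Ez1 := hz₁.trans v2
  -- step 3: (y₁,z₁) ↦ (y₂,z₂)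
  obtain ⟨u3, v3, hq3, hp3⟩ :=
    step β₁ β₂ γ₁ γ₂ y₁ z₁ Ey1 Ez1 (mul_ne_zero one hp1)
      (mul_ne_zero (mul_ne_zero one hq1) hp2) h3 h3'
  have Ey2 := hy₂.trans u3
  have Ez2 := hz₂.trans v3
  -- step 4: (y,z) ↦ (ty,tz)
  obtain ⟨u4, v4, hq4, hp4⟩ :=
    step β₁ β₂ γ₁ γ₂ y z (div_one y).symm (div_one z).symm one one h4 h4'
  have Ety := hty.trans u4
  have Etz := htz.trans v4
  -- step 5: (x,tz) ↦ (tx,tzz)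
  obtain ⟨u5, v5, hq5, hp5⟩ :=
    step α₁ α₂ γ₁ γ₂ x tz (div_one x).symm Etz one (mul_ne_zero one hp4) h5 h5'
  have Etx := htx.trans u5
  have Etzz := htzz.trans v5
  -- step 6: (tx,ty) ↦ (txx,tyy)
  obtain ⟨u6, v6, hq6, hp6⟩ :=
    step α₁ α₂ β₁ β₂ tx ty Etx Ety (mul_ne_zero (mul_ne_zero one hp4) hq5)
      (mul_ne_zero one hq4) h6 h6'
  have Etxx := htxx.trans u6
  have Etyy := htyy.trans v6
  -- involution step
  obtain ⟨ui, vi, hqi, hpi⟩ :=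
    step α₁ α₂ β₁ β₂ x₁ y₁ Ex1 Ey1 (mul_ne_zero one hq1) (mul_ne_zero one hp1) h1i h1i'
  -- invariance products
  have inv1 : x₁ * y₁ = x * y := by rw [hx₁, hy₁, inv_mul _ _ _ _ _ _ h1 h1']
  have inv2 : x₂ * z₁ = x₁ * z := by rw [hx₂, hz₁, inv_mul _ _ _ _ _ _ h2 h2']
  have inv3 : y₂ * z₂ = y₁ * z₁ := by rw [hy₂, hz₂, inv_mul _ _ _ _ _ _ h3 h3']
  have inv4 : ty * tz = y * z := by rw [hty, htz, inv_mul _ _ _ _ _ _ h4 h4']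
  have inv5 : tx * tzz = x * tz := by rw [htx, htzz, inv_mul _ _ _ _ _ _ h5 h5']
  have inv6 : txx * tyy = tx * ty := by rw [htxx, htyy, inv_mul _ _ _ _ _ _ h6 h6']
  -- nonzeroness of z₂ and txx
  have hB : β₁*(1*1) + α₂*(x*y) ≠ 0 := fun h => h1 (by linear_combination h)
  have hK : β₁*(1*1) + γ₂*(y*z) ≠ 0 := fun h => h4' (by linear_combination h)
  have hz2ne : z₂ ≠ 0 := by
    rw [Ez2]
    exact div_ne_zero (mul_ne_zero (mul_ne_zero hx hB) hq3)
      (mul_ne_zero (mul_ne_zero one hp1) hp3)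
  have htxxne : txx ≠ 0 := by
    rw [Etxx]
    exact div_ne_zero (mul_ne_zero (mul_ne_zero hz hK) hp6)
      (mul_ne_zero (mul_ne_zero one hq4) hq6)
  -- the two main Yang-Baxter components, by explicit polynomial identity
  have e4 : x₂ = txx := by
    rw [Ex2, Etxx,
      div_eq_div_iff (mul_ne_zero one hq2) (mul_ne_zero (mul_ne_zero one hq4) hq6)]
    ring
  have e6 : z₂ = tzz := by
    rw [Ez2, Etzz,
      div_eq_div_iff (mul_ne_zero (mul_ne_zero one hp1) hp3) (mul_ne_zero one hp5)]
    ring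
  have e5 : y₂ = tyy := by
    apply mul_right_cancel₀ hz2ne
    apply mul_left_cancel₀ htxxne
    linear_combination txx*inv3 + y₁*inv2 + z*inv1 - y₁*z₁*e4 - tzz*inv6 - ty*inv5 -
      x*inv4 - txx*tyy*e6
  refine ⟨⟨?_, ?_⟩, ?_, e4, e5, e6⟩
  · rw [ui, div_eq_iff (mul_ne_zero (mul_ne_zero one hp1) hqi)]; ring
  · rw [vi, div_eq_iff (mul_ne_zero (mul_ne_zero one hq1) hpi)]; ring
  · linear_combination inv1

end
end

section
/- Let R_{α,β}: X²×X² → X²×X² be a parametric Yang–Baxter map with components (u₁,u₂,v₁,v₂), and let f_α: X → X be a parameter-dependent function such that u₂(x₁,f_α(x₁),y₁,f_β(y₁)) = f_α(u₁(x₁,f_α(x₁),y₁,f_β(y₁))) and v₂(x₁,f_α(x₁),y₁,f_β(y₁)) = f_β(v₁(x₁,f_α(x₁),y₁,f_β(y₁))) for all x₁, y₁ ∈ X and parameters α, β. Then the reduced map R̃_{α,β}(x,y) = (u₁(x,f_α(x),y,f_β(y)), v₁(x,f_α(x),y,f_β(y))) is a parametric Yang–Baxter map. -/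
/-- The action of a map `S` on the first and second factors of a triple product. -/
def R12 {Z : Type*} (S : Z → Z → Z × Z) : Z × Z × Z → Z × Z × Z :=
  fun p => ((S p.1 p.2.1).1, (S p.1 p.2.1).2, p.2.2)

/-- The action of a map `S` on the first and third factors of a triple product. -/
def R13 {Z : Type*} (S : Z → Z → Z × Z) : Z × Z × Z → Z × Z × Z :=
  fun p => ((S p.1 p.2.2).1, p.2.1, (S p.1 p.2.2).2)

/-- The action of a map `S` on the second and third factors of a triple product. -/
def R23 {Z : Type*} (S : Z → Z → Z × Z) : Z × Z × Z → Z × Z × Z :=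
  fun p => (p.1, (S p.2.1 p.2.2).1, (S p.2.1 p.2.2).2)

/-- A parametric family `S_(α,β) : Z × Z → Z × Z` is a parametric Yang–Baxter map if
`R²³_(β,γ) ∘ R¹³_(α,γ) ∘ R¹²_(α,β) = R¹²_(α,β) ∘ R¹³_(α,γ) ∘ R²³_(β,γ)`. -/
def IsParametricYB {Z I : Type*} (S : I → I → Z → Z → Z × Z) : Prop :=
  ∀ α β γ : I,
    R23 (S β γ) ∘ R13 (S α γ) ∘ R12 (S α β) = R12 (S α β) ∘ R13 (S α γ) ∘ R23 (S β γ)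

/-- Lemma 1: if `R_(α,β) : X² × X² → X² × X²` with components
`(u₁,u₂,v₁,v₂)` is a parametric Yang–Baxter map and `f_α : X → X` satisfies the
compatibility conditions
`u₂(x,f_α(x),y,f_β(y)) = f_α(u₁(x,f_α(x),y,f_β(y)))` and
`v₂(x,f_α(x),y,f_β(y)) = f_β(v₁(x,f_α(x),y,f_β(y)))`,
then the reduced map `R̃_(α,β)(x,y) = (u₁(x,f_α(x),y,f_β(y)), v₁(x,f_α(x),y,f_β(y)))`
is a parametric Yang–Baxter map. -/
theorem reduced_YB_map {X I : Type*}
    (u₁ u₂ v₁ v₂ : I → I → X → X → X → X → X)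
    (f : I → X → X)
    (hYB : IsParametricYB (fun (α β : I) (x y : X × X) =>
      ((u₁ α β x.1 x.2 y.1 y.2, u₂ α β x.1 x.2 y.1 y.2),
       (v₁ α β x.1 x.2 y.1 y.2, v₂ α β x.1 x.2 y.1 y.2))))
    (hu : ∀ (α β : I) (x y : X),
      u₂ α β x (f α x) y (f β y) = f α (u₁ α β x (f α x) y (f β y)))
    (hv : ∀ (α β : I) (x y : X),
      v₂ α β x (f α x) y (f β y) = f β (v₁ α β x (f α x) y (f β y))) :
    IsParametricYB (fun (α β : I) (x y : X) =>
      (u₁ α β x (f α x) y (f β y), v₁ α β x (f α x) y (f β y))) := by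
  intro α β γ
  funext p
  obtain ⟨x, y, z⟩ := p
  have h := congrFun (hYB α β γ) ((x, f α x), (y, f β y), (z, f γ z))
  simp only [R12, R13, R23, Function.comp_apply, hu, hv, Prod.mk.injEq] at h ⊢
  obtain ⟨⟨h1, -⟩, ⟨h2, -⟩, ⟨h3, -⟩⟩ := h
  exact ⟨h1, h2, h3⟩
end
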